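/- Let D ≥ 1, N ≥ 2, let y be any D×D complex matrix, and let λ : Fin N → ℂ with λ p ≠ 0 for all p. Define the ND×ND matrix indexed by Fin N × Fin D: Y_N((p,i),(q,j)) = y i j if p = q, λ p * (if i = j then 1 else 0) if q = p+1 (i.e. p.val + 1 = q.val), and 0 otherwise. Then Y_N is not diagonalizable: there do not exist an invertible ND×ND complex matrix P and a function d : (Fin N × Fin D) → ℂ such that Y_N = P * Matrix.diagonal d * P⁻¹. -/

import Mathlib

open Matrix

/-- The N-fold matryoshka hypercharge matrix of equation (4.3) with nonzero superdiagonal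
couplings cannot be diagonalized, because of its nested Jordan block structure (Section 4). -/
theorem matryoshka_N_hypercharge_not_diagonalizable (D N : ℕ) (hD : 1 ≤ D) (hN : 2 ≤ N)
    (y : Matrix (Fin D) (Fin D) ℂ) (lam : Fin N → ℂ) (hlam : ∀ p, lam p ≠ 0)
    (YN : Matrix (Fin N × Fin D) (Fin N × Fin D) ℂ)
    (hY : ∀ (p q : Fin N) (i j : Fin D),
      YN (p, i) (q, j) = if p = q then y i j
        else if (p : ℕ) + 1 = (q : ℕ) then lam p * (if i = j then 1 else 0) else 0) :
    ¬ ∃ (P : Matrix (Fin N × Fin D) (Fin N × Fin D) ℂ) (d : Fin N × Fin D → ℂ),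
        IsUnit P ∧ YN = P * Matrix.diagonal d * P⁻¹ := by
  rintro ⟨P, d, hP, hYP⟩
  haveI : NeZero D := ⟨by omega⟩
  -- eigenvalue of y
  haveI : Nontrivial (Fin D → ℂ) := Function.nontrivial
  obtain ⟨μ, hμ⟩ := Module.End.exists_eigenvalue (Matrix.mulVecLin y)
  obtain ⟨v, hv⟩ := hμ.exists_hasEigenvector
  have hvy : y.mulVec v = μ • v := by
    have := hv.apply_eq_smul
    simpa [Matrix.mulVecLin_apply] using this
  have hv0 : v ≠ 0 := hv.2
  have hN0 : 0 < N := by omega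
  set p0 : Fin N := ⟨0, by omega⟩ with hp0def
  set p1 : Fin N := ⟨1, by omega⟩ with hp1def
  -- general computation of YN acting on a single-block vector
  have key : ∀ (r : Fin N) (u : Fin D → ℂ) (p : Fin N) (i : Fin D),
      YN.mulVec (fun x => if x.1 = r then u x.2 else 0) (p, i) =
        (if p = r then y.mulVec u i else 0) +
        (if (p : ℕ) + 1 = (r : ℕ) then lam p * u i else 0) := by
    intro r u p i
    rw [Matrix.mulVec, dotProduct]
    rw [Fintype.sum_prod_type]
    have : ∀ q : Fin N, ∑ j : Fin D, YN (p, i) (q, j) * (if (q, j).1 = r then u (q, j).2 else 0)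
        = if q = r then ∑ j : Fin D, YN (p, i) (q, j) * u j else 0 := by
      intro q
      by_cases hq : q = r <;> simp [hq]
    rw [Finset.sum_congr rfl fun q _ => this q]
    rw [Finset.sum_ite_eq' Finset.univ r (fun q => ∑ j : Fin D, YN (p, i) (q, j) * u j)]
    simp only [Finset.mem_univ, if_true]
    by_cases hpr : p = r
    · subst hpr
      have : ((p : ℕ) + 1 = (p : ℕ)) = False := by simp
      simp [hY, Matrix.mulVec, dotProduct]
    · by_cases hps : (p : ℕ) + 1 = (r : ℕ)
      · simp only [hY, hpr, if_false, hps, if_true]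
        rw [Finset.sum_congr rfl (fun j _ => by rw [mul_assoc])]
        rw [← Finset.mul_sum]
        simp [Finset.sum_ite_eq Finset.univ i, hpr, hps]
      · simp [hY, hpr, hps]
  set w : Fin N × Fin D → ℂ := fun x => if x.1 = p1 then v x.2 else 0 with hwdef
  set w' : Fin N × Fin D → ℂ := fun x => if x.1 = p0 then lam p0 * v x.2 else 0 with hw'def
  set B : Matrix (Fin N × Fin D) (Fin N × Fin D) ℂ := YN - μ • 1 with hBdef
  have hp01 : p0 ≠ p1 := by simp [hp0def, hp1def, Fin.ext_iff]
  have hBw : B.mulVec w = w' := by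
    funext x
    obtain ⟨p, i⟩ := x
    rw [hBdef, Matrix.sub_mulVec]
    simp only [Pi.sub_apply, Matrix.smul_mulVec, Matrix.one_mulVec]
    rw [key p1 v p i]
    by_cases hp : p = p1
    · subst hp
      have h1 : ¬ ((p1 : ℕ) + 1 = (p1 : ℕ)) := by omega
      simp [hwdef, hw'def, hvy, h1, hp01.symm]
    · by_cases hp' : (p : ℕ) + 1 = (p1 : ℕ)
      · have hpp0 : p = p0 := by
          rw [Fin.ext_iff]; simp [hp1def] at hp'; simp [hp0def]; omega
        subst hpp0
        simp [hwdef, hw'def, hp, hp01, hp']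
      · have hpp0 : p ≠ p0 := by
          intro h; subst h; simp [hp0def, hp1def] at hp'
        simp [hwdef, hw'def, hp, hp', hpp0]
  have hBw' : B.mulVec w' = 0 := by
    funext x
    obtain ⟨p, i⟩ := x
    rw [hBdef, Matrix.sub_mulVec]
    simp only [Pi.sub_apply, Matrix.smul_mulVec, Matrix.one_mulVec]
    have : w' = fun x => if x.1 = p0 then (fun j => lam p0 * v j) x.2 else 0 := rfl
    rw [this, key p0 (fun j => lam p0 * v j) p i]
    have h1 : ¬ ((p : ℕ) + 1 = (p0 : ℕ)) := by simp [hp0def]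
    by_cases hp : p = p0
    · subst hp
      have : y.mulVec (fun j => lam p0 * v j) i = lam p0 * (μ * v i) := by
        have : (fun j => lam p0 * v j) = lam p0 • v := by funext j; simp
        rw [this, Matrix.mulVec_smul, hvy]
        simp [mul_comm, mul_left_comm]
      simp [hw'def, this, h1, Pi.zero_apply]
      ring
    · simp [hw'def, hp, h1, Pi.zero_apply]
  -- nonvanishing of B w
  obtain ⟨i0, hi0⟩ : ∃ i, v i ≠ 0 := Function.ne_iff.mp hv0
  have hBwne : B.mulVec w ≠ 0 := by
    rw [hBw]
    intro h
    apply mul_ne_zero (hlam p0) hi0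
    simpa [hw'def] using congrFun h (p0, i0)
  -- diagonalization contradiction
  have hPdet : IsUnit P.det := (Matrix.isUnit_iff_isUnit_det P).mp hP
  set De : Matrix (Fin N × Fin D) (Fin N × Fin D) ℂ := Matrix.diagonal (fun k => d k - μ) with hDedef
  have hB : B = P * De * P⁻¹ := by
    have h1 : (μ • 1 : Matrix (Fin N × Fin D) (Fin N × Fin D) ℂ)
        = P * (μ • 1) * P⁻¹ := by
      rw [Matrix.mul_smul, Matrix.mul_one, Matrix.smul_mul, Matrix.mul_nonsing_inv _ hPdet]
    rw [hBdef, hYP, h1]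
    rw [← Matrix.sub_mul, ← Matrix.mul_sub]
    congr 1
    congr 1
    rw [hDedef, Matrix.smul_one_eq_diagonal, ← Matrix.diagonal_sub]
  have hu : De.mulVec (P⁻¹.mulVec w) = 0 := by
    have h2 : (De * De).mulVec (P⁻¹.mulVec w) = 0 := by
      have hBB : B.mulVec (B.mulVec w) = 0 := by rw [hBw, hBw']
      rw [hB, Matrix.mulVec_mulVec] at hBB
      have hM : (P * De * P⁻¹) * (P * De * P⁻¹) = P * (De * (De * P⁻¹)) := by
        simp only [Matrix.mul_assoc]
        rw [Matrix.nonsing_inv_mul_cancel_left _ _ hPdet]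
      rw [hM] at hBB
      have h3 := congrArg (P⁻¹.mulVec) hBB
      rw [Matrix.mulVec_mulVec, Matrix.nonsing_inv_mul_cancel_left _ _ hPdet] at h3
      rw [Matrix.mulVec_mulVec, Matrix.mul_assoc]
      simpa using h3
    funext k
    have hk := congrFun h2 k
    rw [hDedef, Matrix.diagonal_mul_diagonal, Matrix.mulVec_diagonal] at hk
    rw [hDedef, Matrix.mulVec_diagonal]
    have h0 : (d k - μ) * ((d k - μ) * P⁻¹.mulVec w k) = 0 := by
      have hk' : (d k - μ) * (d k - μ) * P⁻¹.mulVec w k = 0 := by simpa using hk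
      linear_combination hk'
    rcases mul_eq_zero.mp h0 with h | h
    · simp [h]
    · simpa using h
  apply hBwne
  rw [hB, ← Matrix.mulVec_mulVec, ← Matrix.mulVec_mulVec, hu]
  simp
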